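/- arXiv:1705.01309 — 3 statements merged into one kernel-verified Lean document; each statement's English description precedes it below -/
import Mathlib

section
/- Let d ≥ 1 be an integer and γ ∈ (-d, 0). Then there exist constants C₁, C₂ > 0, depending only on γ and d, such that for every v ∈ ℝ^d one has C₁ (1+|v|)^γ ≤ Σ_γ(v) ≤ C₂ (1+|v|)^γ, where Σ_γ(v) = ∫_{ℝ^d} |v-v_*|^γ M(v_*) dv_*. -/
open MeasureTheory Real
open scoped ENNReal RealInnerProductSpace

noncomputable section

abbrev Rd (d : ℕ) := EuclideanSpace ℝ (Fin d)

/-- The normalized Maxwellian `M(v) = (2π)^{-d/2} exp(-|v|²/2)`. -/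
def Maxw (d : ℕ) (v : Rd d) : ℝ := (2 * π) ^ (-(d : ℝ) / 2) * Real.exp (-‖v‖ ^ 2 / 2)

/-- The surface measure on the unit sphere of `ℝ^d`. -/
def sphereMeas (d : ℕ) : Measure (Metric.sphere (0 : Rd d) 1) :=
  (volume : Measure (Rd d)).toSphere

/-- post-collisional velocity `v' = (v+v_*)/2 + (|v-v_*|/2)σ`. -/
def vpr (d : ℕ) (v vs σ : Rd d) : Rd d := (2 : ℝ)⁻¹ • (v + vs) + (‖v - vs‖ / 2) • σ

/-- post-collisional velocity `v_*' = (v+v_*)/2 - (|v-v_*|/2)σ`. -/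
def vspr (d : ℕ) (v vs σ : Rd d) : Rd d := (2 : ℝ)⁻¹ • (v + vs) - (‖v - vs‖ / 2) • σ

/-- `cos θ = ((v-v_*)/|v-v_*|) · σ`. -/
def cosTheta (d : ℕ) (v vs σ : Rd d) : ℝ := ⟪‖v - vs‖⁻¹ • (v - vs), σ⟫

/-- The angular kernel: even, nonnegative, measurable, normalized on the sphere. -/
def IsAngKernel (d : ℕ) (b : ℝ → ℝ) : Prop :=
  Measurable b ∧ (∀ x, 0 ≤ b x) ∧ (∀ x, b (-x) = b x) ∧
    ∀ e : Rd d, ‖e‖ = 1 →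
      (∫ σ : Metric.sphere (0 : Rd d) 1, b ⟪e, (σ : Rd d)⟫ ∂(sphereMeas d)) = 1

/-- The collision frequency `Σ_α(v) = ∫ |v-v_*|^α M(v_*) dv_*`. -/
def collFreq (d : ℕ) (α : ℝ) (v : Rd d) : ℝ := ∫ vs : Rd d, ‖v - vs‖ ^ α * Maxw d vs

/-- The gain operator `K_α f(v)`. -/
def gainOp (d : ℕ) (b : ℝ → ℝ) (α : ℝ) (f : Rd d → ℝ) (v : Rd d) : ℝ :=
  ∫ vs : Rd d, ∫ σ : Metric.sphere (0 : Rd d) 1,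
    ‖v - vs‖ ^ α * b (cosTheta d v vs σ) * f (vpr d v vs σ) * Maxw d (vspr d v vs σ)
      ∂(sphereMeas d)

/-- The entropy production `D_α(f)`, as an element of `[0,∞]`. -/
def entProd (d : ℕ) (b : ℝ → ℝ) (α : ℝ) (f : Rd d → ℝ) : ℝ≥0∞ :=
  2⁻¹ * ∫⁻ v : Rd d, ∫⁻ vs : Rd d, ∫⁻ σ : Metric.sphere (0 : Rd d) 1,
    ENNReal.ofReal (‖v - vs‖ ^ α * b (cosTheta d v vs σ) * Maxw d v * Maxw d vs *
      ((f (vpr d v vs σ) / Maxw d (vpr d v vs σ) - f v / Maxw d v) *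
        Real.log ((f (vpr d v vs σ) / Maxw d (vpr d v vs σ)) / (f v / Maxw d v))))
      ∂(sphereMeas d)

/-- The relative entropy `H(f|M) = ∫ f log (f/M)`. -/
def relEnt (d : ℕ) (f : Rd d → ℝ) : ℝ := ∫ v : Rd d, f v * Real.log (f v / Maxw d v)

/-- `⟨v⟩ = (1+|v|²)^{1/2}`. -/
def jap (d : ℕ) (v : Rd d) : ℝ := Real.sqrt (1 + ‖v‖ ^ 2)

/-- A solution of the linear Boltzmann equation with initial datum `f₀`. -/
def IsSolution (d : ℕ) (b : ℝ → ℝ) (γ : ℝ) (f : ℝ → Rd d → ℝ) (f₀ : Rd d → ℝ) : Prop :=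
  f 0 = f₀ ∧
  (∀ t : ℝ, 0 ≤ t → Integrable (f t) ∧ (∀ v, 0 ≤ f t v) ∧ (∫ v : Rd d, f t v) = 1) ∧
  ∀ᵐ v : Rd d, ∀ t : ℝ, 0 ≤ t →
    HasDerivWithinAt (fun s => f s v)
      (gainOp d b γ (f t) v - collFreq d γ v * f t v) (Set.Ici 0) t

section AuxCFB

open Metric Set

lemma cfb_maxw_pos (d : ℕ) (v : Rd d) : 0 < Maxw d v := by
  have h : (0:ℝ) < π := Real.pi_pos
  unfold Maxw
  positivity

lemma cfb_maxw_le (d : ℕ) (v : Rd d) : Maxw d v ≤ (2 * π) ^ (-(d : ℝ) / 2) := by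
  have h : (0:ℝ) < π := Real.pi_pos
  have h2 : Real.exp (-‖v‖ ^ 2 / 2) ≤ 1 := by
    rw [← Real.exp_zero]
    apply Real.exp_le_exp.2
    nlinarith [sq_nonneg ‖v‖]
  unfold Maxw
  calc (2 * π) ^ (-(d : ℝ) / 2) * Real.exp (-‖v‖ ^ 2 / 2)
      ≤ (2 * π) ^ (-(d : ℝ) / 2) * 1 := by gcongr
    _ = _ := mul_one _

lemma cfb_gauss_integrable (d : ℕ) {b : ℝ} (hb : 0 < b) :
    Integrable (fun v : Rd d => Real.exp (-b * ‖v‖ ^ 2)) := by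
  have h := (GaussianFourier.integrable_cexp_neg_mul_sq_norm_add (V := Rd d) (b := (b:ℂ))
      (by simpa using hb) 0 0).norm
  refine h.congr (Filter.Eventually.of_forall fun v => ?_)
  simp [Complex.norm_exp]
  exact Or.inl (by rw [← Complex.ofReal_pow]; exact Complex.ofReal_re _)

lemma cfb_maxw_integrable (d : ℕ) : Integrable (Maxw d) := by
  have h := (cfb_gauss_integrable d (b := (2:ℝ)⁻¹) (by norm_num)).const_mul
    ((2 * π) ^ (-(d : ℝ) / 2))
  have hfun : Maxw d = fun v : Rd d =>
      (2 * π) ^ (-(d : ℝ) / 2) * Real.exp (-(2:ℝ)⁻¹ * ‖v‖ ^ 2) := by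
    funext v
    unfold Maxw
    congr 1
    ring
  rw [hfun]
  exact h

lemma cfb_maxw_meas (d : ℕ) : Measurable (Maxw d) := by
  unfold Maxw
  fun_prop

/-- Integrability of `‖x‖ ^ γ` on the unit ball, for `-d < γ < 0`. -/
lemma cfb_I1_integrable (d : ℕ) (hd : 1 ≤ d) {γ : ℝ} (hγl : -(d : ℝ) < γ) (hγu : γ < 0) :
    IntegrableOn (fun x : Rd d => ‖x‖ ^ γ) (ball (0 : Rd d) 1) := by
  haveI : Nontrivial (Rd d) :=
    Module.nontrivial_of_finrank_pos (R := ℝ)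
      (by rw [finrank_euclideanSpace_fin]; omega)
  have hmeas : Measurable (fun x : Rd d => ‖x‖ ^ γ) := measurable_norm.pow measurable_const
  constructor
  · exact hmeas.aestronglyMeasurable
  · rw [HasFiniteIntegral,
      lintegral_enorm_of_nonneg (fun x => Real.rpow_nonneg (norm_nonneg _) _),
      lintegral_eq_lintegral_meas_le _ (Filter.Eventually.of_forall
        (fun x => Real.rpow_nonneg (norm_nonneg _) _)) hmeas.aemeasurable]
    have hsub : ∀ t : ℝ, 0 < t →
        {a : Rd d | t ≤ ‖a‖ ^ γ} ⊆ closedBall 0 (t ^ γ⁻¹) := by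
      intro t ht a ha
      simp only [mem_setOf_eq] at ha
      have ha0 : a ≠ 0 := by
        rintro rfl
        rw [norm_zero, Real.zero_rpow hγu.ne] at ha
        linarith
      have hna : 0 < ‖a‖ := norm_pos_iff.2 ha0
      rw [mem_closedBall_zero_iff]
      calc ‖a‖ = (‖a‖ ^ γ) ^ γ⁻¹ := by
            rw [← Real.rpow_mul (norm_nonneg _), mul_inv_cancel₀ hγu.ne, Real.rpow_one]
        _ ≤ t ^ γ⁻¹ := Real.rpow_le_rpow_of_nonpos ht ha (inv_nonpos.2 hγu.le)
    set ν := (volume : Measure (Rd d)).restrict (ball (0 : Rd d) 1)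
    have key : ∀ t : ℝ, t ∈ Ioi (0:ℝ) → ν {a : Rd d | t ≤ ‖a‖ ^ γ} ≤
        min (volume (ball (0 : Rd d) 1))
          (volume (closedBall (0 : Rd d) (t ^ γ⁻¹))) := by
      intro t ht
      refine le_min ?_ ?_
      · calc ν {a : Rd d | t ≤ ‖a‖ ^ γ} ≤ ν univ := measure_mono (subset_univ _)
          _ = volume (ball (0 : Rd d) 1) := by
              simp [ν, Measure.restrict_apply_univ]
      · calc ν {a : Rd d | t ≤ ‖a‖ ^ γ}
            ≤ volume {a : Rd d | t ≤ ‖a‖ ^ γ} := Measure.restrict_le_self _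
          _ ≤ _ := measure_mono (hsub t ht)
    calc (∫⁻ t in Ioi (0:ℝ), ν {a : Rd d | t ≤ ‖a‖ ^ γ})
        ≤ ∫⁻ t in Ioi (0:ℝ), min (volume (ball (0 : Rd d) 1))
            (volume (closedBall (0 : Rd d) (t ^ γ⁻¹))) :=
          setLIntegral_mono' measurableSet_Ioi key
      _ ≤ (∫⁻ t in Ioc (0:ℝ) 1, min (volume (ball (0 : Rd d) 1))
            (volume (closedBall (0 : Rd d) (t ^ γ⁻¹)))) +
          ∫⁻ t in Ioi (1:ℝ), min (volume (ball (0 : Rd d) 1))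
            (volume (closedBall (0 : Rd d) (t ^ γ⁻¹))) := by
          rw [← lintegral_union measurableSet_Ioi]
          · exact lintegral_mono_set Ioi_subset_Ioc_union_Ioi
          · exact Ioc_disjoint_Ioi le_rfl
      _ < ∞ := by
          apply ENNReal.add_lt_top.2
          constructor
          · calc (∫⁻ t in Ioc (0:ℝ) 1, min (volume (ball (0 : Rd d) 1))
                (volume (closedBall (0 : Rd d) (t ^ γ⁻¹))))
                ≤ ∫⁻ _ in Ioc (0:ℝ) 1, volume (ball (0 : Rd d) 1) :=
                  lintegral_mono (fun t => min_le_left _ _)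
              _ = volume (ball (0 : Rd d) 1) * volume (Ioc (0:ℝ) 1) := by
                  rw [setLIntegral_const]
              _ < ∞ := by
                  apply ENNReal.mul_lt_top measure_ball_lt_top
                  simp [Real.volume_Ioc]
          · have hlt : (d : ℝ) * γ⁻¹ < -1 := by
              rw [show (d : ℝ) * γ⁻¹ = (d : ℝ) / γ by ring, div_lt_iff_of_neg hγu]
              linarith
            calc (∫⁻ t in Ioi (1:ℝ), min (volume (ball (0 : Rd d) 1))
                  (volume (closedBall (0 : Rd d) (t ^ γ⁻¹))))
                ≤ ∫⁻ t in Ioi (1:ℝ),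
                    ENNReal.ofReal (t ^ ((d : ℝ) * γ⁻¹)) * volume (ball (0 : Rd d) 1) := by
                  apply setLIntegral_mono' measurableSet_Ioi
                  intro t ht
                  have ht1 : (1:ℝ) ≤ t := le_of_lt ht
                  have ht0 : (0:ℝ) < t := lt_of_lt_of_le one_pos ht1
                  refine le_trans (min_le_right _ _) ?_
                  rw [Measure.addHaar_closedBall _ _ (Real.rpow_nonneg ht0.le _),
                    finrank_euclideanSpace_fin, ← Real.rpow_natCast (t ^ γ⁻¹) d,
                    ← Real.rpow_mul ht0.le, mul_comm γ⁻¹ (d:ℝ)]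
              _ < ∞ := by
                  rw [lintegral_mul_const' _ _ measure_ball_lt_top.ne]
                  apply ENNReal.mul_lt_top _ measure_ball_lt_top
                  exact (integrableOn_Ioi_rpow_of_lt hlt one_pos).setLIntegral_lt_top

end AuxCFB
section AuxCFB2

open Metric Set

variable {d : ℕ} {γ : ℝ}

lemma cfb_ball_indicator_eq (d : ℕ) (γ : ℝ) (v vs : Rd d) :
    (ball (0 : Rd d) 1).indicator (fun x => ‖x‖ ^ γ) (v - vs) =
      (ball v 1).indicator (fun w => ‖v - w‖ ^ γ) vs := by
  by_cases h : vs ∈ ball v 1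
  · have h' : v - vs ∈ ball (0 : Rd d) 1 := by
      rw [mem_ball_zero_iff, norm_sub_rev]
      rwa [mem_ball, dist_eq_norm] at h
    rw [indicator_of_mem h', indicator_of_mem h]
  · have h' : v - vs ∉ ball (0 : Rd d) 1 := by
      intro hc
      apply h
      rw [mem_ball_zero_iff, norm_sub_rev] at hc
      rwa [mem_ball, dist_eq_norm]
    rw [indicator_of_notMem h', indicator_of_notMem h]

lemma cfb_transl_integrableOn (hd : 1 ≤ d) (hγl : -(d : ℝ) < γ) (hγu : γ < 0) (v : Rd d) :
    IntegrableOn (fun vs : Rd d => ‖v - vs‖ ^ γ) (ball v 1) := by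
  have h1 : Integrable ((ball (0 : Rd d) 1).indicator (fun x => ‖x‖ ^ γ)) :=
    (integrable_indicator_iff measurableSet_ball).2 (cfb_I1_integrable d hd hγl hγu)
  have h2 := h1.comp_sub_left v
  rw [← integrable_indicator_iff measurableSet_ball]
  exact h2.congr (Filter.Eventually.of_forall fun vs => cfb_ball_indicator_eq d γ v vs)

lemma cfb_transl_integral (v : Rd d) :
    ∫ vs in ball v 1, ‖v - vs‖ ^ γ = ∫ x in ball (0 : Rd d) 1, ‖x‖ ^ γ := by
  rw [← integral_indicator measurableSet_ball, ← integral_indicator measurableSet_ball]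
  calc ∫ vs, (ball v 1).indicator (fun w => ‖v - w‖ ^ γ) vs
      = ∫ vs, (ball (0 : Rd d) 1).indicator (fun x => ‖x‖ ^ γ) (v - vs) :=
        integral_congr_ae (Filter.Eventually.of_forall fun vs =>
          (cfb_ball_indicator_eq d γ v vs).symm)
    _ = _ := integral_sub_left_eq_self _ _ v

lemma cfb_sub_meas (d : ℕ) (γ : ℝ) (v : Rd d) :
    Measurable (fun vs : Rd d => ‖v - vs‖ ^ γ) :=
  ((measurable_const.sub measurable_id).norm).pow measurable_const

lemma cfb_annulus_integrableOn (hγu : γ < 0) (v : Rd d) (R : ℝ) :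
    IntegrableOn (fun vs : Rd d => ‖v - vs‖ ^ γ) (ball v R \ ball v 1) := by
  apply Measure.integrableOn_of_bounded (M := 1)
  · exact ((measure_mono diff_subset).trans_lt measure_ball_lt_top).ne
  · exact (cfb_sub_meas d γ v).aestronglyMeasurable
  · refine (ae_restrict_iff' (measurableSet_ball.diff measurableSet_ball)).2
      (Filter.Eventually.of_forall fun vs hvs => ?_)
    have h1 : 1 ≤ ‖v - vs‖ := by
      have h2 := hvs.2
      rw [mem_ball, dist_eq_norm, norm_sub_rev, not_lt] at h2
      exact h2
    rw [Real.norm_eq_abs, abs_of_nonneg (Real.rpow_nonneg (norm_nonneg _) _)]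
    exact Real.rpow_le_one_of_one_le_of_nonpos h1 hγu.le

lemma cfb_J_bound (hd : 1 ≤ d) (hγl : -(d : ℝ) < γ) (hγu : γ < 0) (v : Rd d)
    {R : ℝ} (hR : 0 < R) :
    IntegrableOn (fun vs : Rd d => ‖v - vs‖ ^ γ) (ball v R) ∧
      ∫ vs in ball v R, ‖v - vs‖ ^ γ ≤
        (∫ x in ball (0 : Rd d) 1, ‖x‖ ^ γ) +
          R ^ d * (volume (ball (0 : Rd d) 1)).toReal := by
  haveI : Nontrivial (Rd d) :=
    Module.nontrivial_of_finrank_pos (R := ℝ)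
      (by rw [finrank_euclideanSpace_fin]; omega)
  have hnn : ∀ vs : Rd d, 0 ≤ ‖v - vs‖ ^ γ :=
    fun vs => Real.rpow_nonneg (norm_nonneg _) _
  have hu : IntegrableOn (fun vs : Rd d => ‖v - vs‖ ^ γ)
      (ball v 1 ∪ (ball v R \ ball v 1)) :=
    (cfb_transl_integrableOn hd hγl hγu v).union (cfb_annulus_integrableOn hγu v R)
  have hsub : ball v R ⊆ ball v 1 ∪ (ball v R \ ball v 1) := fun x hx =>
    (em (x ∈ ball v 1)).elim Or.inl fun h => Or.inr ⟨hx, h⟩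
  refine ⟨hu.mono_set hsub, ?_⟩
  have hvol : (volume (ball v R \ ball v 1)).toReal ≤
      R ^ d * (volume (ball (0 : Rd d) 1)).toReal := by
    have h1 : volume (ball v R \ ball v 1) ≤ volume (ball v R) :=
      measure_mono diff_subset
    have h2 : volume (ball v R) =
        ENNReal.ofReal (R ^ d) * volume (ball (0 : Rd d) 1) := by
      rw [Measure.addHaar_ball volume v hR.le, finrank_euclideanSpace_fin]
    calc (volume (ball v R \ ball v 1)).toReal
        ≤ (volume (ball v R)).toReal :=
          ENNReal.toReal_mono measure_ball_lt_top.ne h1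
      _ = R ^ d * (volume (ball (0 : Rd d) 1)).toReal := by
          rw [h2, ENNReal.toReal_mul, ENNReal.toReal_ofReal (by positivity)]
  calc ∫ vs in ball v R, ‖v - vs‖ ^ γ
      ≤ ∫ vs in ball v 1 ∪ (ball v R \ ball v 1), ‖v - vs‖ ^ γ :=
        setIntegral_mono_set hu (Filter.Eventually.of_forall hnn)
          (HasSubset.Subset.eventuallyLE hsub)
    _ = (∫ vs in ball v 1, ‖v - vs‖ ^ γ) +
        ∫ vs in ball v R \ ball v 1, ‖v - vs‖ ^ γ :=
        setIntegral_union disjoint_sdiff_right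
          (measurableSet_ball.diff measurableSet_ball)
          (cfb_transl_integrableOn hd hγl hγu v) (cfb_annulus_integrableOn hγu v R)
    _ ≤ (∫ x in ball (0 : Rd d) 1, ‖x‖ ^ γ) +
        R ^ d * (volume (ball (0 : Rd d) 1)).toReal := by
        rw [cfb_transl_integral]
        gcongr
        calc ∫ vs in ball v R \ ball v 1, ‖v - vs‖ ^ γ
            ≤ ∫ _vs in ball v R \ ball v 1, (1 : ℝ) := by
              apply setIntegral_mono_on (cfb_annulus_integrableOn hγu v R)
                (integrableOn_const
                  ((measure_mono diff_subset).trans_lt measure_ball_lt_top).ne)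
                (measurableSet_ball.diff measurableSet_ball)
              intro vs hvs
              have h1 : 1 ≤ ‖v - vs‖ := by
                have h2 := hvs.2
                rw [mem_ball, dist_eq_norm, norm_sub_rev, not_lt] at h2
                exact h2
              exact Real.rpow_le_one_of_one_le_of_nonpos h1 hγu.le
          _ = (volume (ball v R \ ball v 1)).toReal := by
              rw [setIntegral_const, smul_eq_mul, mul_one]; rfl
          _ ≤ _ := hvol

lemma cfb_g_integrable (hd : 1 ≤ d) (hγl : -(d : ℝ) < γ) (hγu : γ < 0) (v : Rd d) :
    Integrable (fun vs : Rd d => ‖v - vs‖ ^ γ * Maxw d vs) := by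
  have hmeas : AEStronglyMeasurable (fun vs : Rd d => ‖v - vs‖ ^ γ * Maxw d vs) volume :=
    ((cfb_sub_meas d γ v).mul (cfb_maxw_meas d)).aestronglyMeasurable
  rw [← integrableOn_univ, ← union_compl_self (ball v 1)]
  apply IntegrableOn.union
  · apply Integrable.mono'
      (((cfb_transl_integrableOn hd hγl hγu v).const_mul ((2 * π) ^ (-(d : ℝ) / 2))))
      hmeas.restrict
    refine Filter.Eventually.of_forall fun vs => ?_
    rw [Real.norm_eq_abs, abs_of_nonneg (mul_nonneg (Real.rpow_nonneg (norm_nonneg _) _)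
      (cfb_maxw_pos d vs).le)]
    calc ‖v - vs‖ ^ γ * Maxw d vs ≤ ‖v - vs‖ ^ γ * (2 * π) ^ (-(d : ℝ) / 2) :=
          mul_le_mul_of_nonneg_left (cfb_maxw_le d vs) (Real.rpow_nonneg (norm_nonneg _) _)
      _ = (2 * π) ^ (-(d : ℝ) / 2) * ‖v - vs‖ ^ γ := mul_comm _ _
  · apply Integrable.mono' (cfb_maxw_integrable d).restrict hmeas.restrict
    refine (ae_restrict_iff' measurableSet_ball.compl).2
      (Filter.Eventually.of_forall fun vs hvs => ?_)
    have h1 : 1 ≤ ‖v - vs‖ := by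
      rw [mem_compl_iff, mem_ball, dist_eq_norm, norm_sub_rev, not_lt] at hvs
      exact hvs
    rw [Real.norm_eq_abs, abs_of_nonneg (mul_nonneg (Real.rpow_nonneg (norm_nonneg _) _)
      (cfb_maxw_pos d vs).le)]
    calc ‖v - vs‖ ^ γ * Maxw d vs ≤ 1 * Maxw d vs :=
          mul_le_mul_of_nonneg_right (Real.rpow_le_one_of_one_le_of_nonpos h1 hγu.le)
            (cfb_maxw_pos d vs).le
      _ = Maxw d vs := one_mul _

lemma cfb_exp_pow_bound (d : ℕ) (hd : 1 ≤ d) {t : ℝ} (ht : 0 ≤ t) :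
    Real.exp (-(max ((t - 1) / 2) 0) ^ 2 / 2) * (1 + t) ^ (2 * d) ≤
      (4 : ℝ) ^ (2 * d) + 4 ^ d * (18 * d) ^ d := by
  have hm0 : (0 : ℝ) ≤ max ((t - 1) / 2) 0 := le_max_right _ _
  rcases le_or_gt t 3 with h3 | h3
  · have hE : Real.exp (-(max ((t - 1) / 2) 0) ^ 2 / 2) ≤ 1 := by
      rw [← Real.exp_zero]
      apply Real.exp_le_exp.2
      nlinarith [sq_nonneg (max ((t - 1) / 2) 0)]
    calc Real.exp (-(max ((t - 1) / 2) 0) ^ 2 / 2) * (1 + t) ^ (2 * d)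
        ≤ 1 * (4 : ℝ) ^ (2 * d) :=
          mul_le_mul hE (pow_le_pow_left₀ (by linarith) (by linarith) _)
            (pow_nonneg (by linarith) _) one_pos.le
      _ = (4 : ℝ) ^ (2 * d) := one_mul _
      _ ≤ _ := le_add_of_nonneg_right (by positivity)
  · have hd0 : (0 : ℝ) < d := by exact_mod_cast Nat.pos_of_ne_zero (by omega)
    have ht0 : (0 : ℝ) < t := by linarith
    have hm : max ((t - 1) / 2) 0 = (t - 1) / 2 := max_eq_left (by linarith)
    have h1 : Real.exp (-(max ((t - 1) / 2) 0) ^ 2 / 2) ≤ Real.exp (-(t ^ 2 / 18)) := by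
      rw [hm]
      apply Real.exp_le_exp.2
      nlinarith
    have hpos : (0 : ℝ) < (t ^ 2 / (18 * d)) ^ d := by positivity
    have hexp : (t ^ 2 / (18 * d)) ^ d ≤ Real.exp (t ^ 2 / 18) := by
      have h2 : t ^ 2 / 18 = (d : ℕ) * (t ^ 2 / (18 * d)) := by
        field_simp
      rw [h2, Real.exp_nat_mul]
      exact pow_le_pow_left₀ (by positivity)
        (le_trans (by linarith [Real.add_one_le_exp (t ^ 2 / (18 * d))])
          le_rfl) _
    have hEinv : Real.exp (-(t ^ 2 / 18)) ≤ ((t ^ 2 / (18 * d)) ^ d)⁻¹ := by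
      rw [Real.exp_neg]
      exact inv_anti₀ hpos hexp
    calc Real.exp (-(max ((t - 1) / 2) 0) ^ 2 / 2) * (1 + t) ^ (2 * d)
        ≤ ((t ^ 2 / (18 * d)) ^ d)⁻¹ * (2 * t) ^ (2 * d) :=
          mul_le_mul (h1.trans hEinv) (pow_le_pow_left₀ (by linarith) (by linarith) _)
            (pow_nonneg (by linarith) _) (inv_nonneg.2 hpos.le)
      _ = ((t ^ 2 / (18 * d))⁻¹) ^ d * ((2 * t) ^ 2) ^ d := by
          rw [pow_mul, inv_pow]
      _ = ((t ^ 2 / (18 * d))⁻¹ * (2 * t) ^ 2) ^ d := (mul_pow _ _ _).symm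
      _ = (4 * (18 * d)) ^ d := by
          congr 1
          field_simp
          ring
      _ = 4 ^ d * (18 * d) ^ d := mul_pow _ _ _
      _ ≤ _ := le_add_of_nonneg_left (by positivity)

end AuxCFB2
/-- two-sided bounds for the collision frequency `Σ_γ`. -/
theorem collision_frequency_bounds (d : ℕ) (hd : 1 ≤ d) (γ : ℝ)
    (hγl : -(d : ℝ) < γ) (hγu : γ < 0) :
    ∃ C₁ C₂ : ℝ, 0 < C₁ ∧ 0 < C₂ ∧ ∀ v : Rd d,
      C₁ * (1 + ‖v‖) ^ γ ≤ collFreq d γ v ∧ collFreq d γ v ≤ C₂ * (1 + ‖v‖) ^ γ := by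
  classical
  haveI hnt : Nontrivial (Rd d) :=
    Module.nontrivial_of_finrank_pos (R := ℝ) (by rw [finrank_euclideanSpace_fin]; omega)
  set C₀ : ℝ := (2 * π) ^ (-(d : ℝ) / 2) with hC₀
  have hC₀pos : 0 < C₀ := by have := Real.pi_pos; positivity
  set I₁ : ℝ := ∫ x in Metric.ball (0 : Rd d) 1, ‖x‖ ^ γ with hI₁
  have hI₁nn : 0 ≤ I₁ := setIntegral_nonneg measurableSet_ball
    fun x _ => Real.rpow_nonneg (norm_nonneg _) _
  set Vol : ℝ := (volume (Metric.ball (0 : Rd d) 1)).toReal with hVol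
  have hVolpos : 0 < Vol :=
    ENNReal.toReal_pos (Metric.measure_ball_pos _ _ one_pos).ne' measure_ball_lt_top.ne
  set K : ℝ := ∫ vs : Rd d, Maxw d vs with hK
  have hKnn : 0 ≤ K := integral_nonneg fun vs => (cfb_maxw_pos d vs).le
  set A₀ : ℝ := (4 : ℝ) ^ (2 * d) + 4 ^ d * (18 * d) ^ d with hA₀
  have hA₀nn : 0 ≤ A₀ := by positivity
  have hterm1 : 0 ≤ C₀ * (I₁ + Vol) * A₀ :=
    mul_nonneg (mul_nonneg hC₀pos.le (by linarith)) hA₀nn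
  have hterm2 : 0 ≤ (2 : ℝ) ^ (-γ) * K :=
    mul_nonneg (Real.rpow_nonneg (by norm_num) _) hKnn
  clear_value C₀ I₁ Vol K A₀
  refine ⟨C₀ * Real.exp (-2⁻¹) * Vol, C₀ * (I₁ + Vol) * A₀ + (2 : ℝ) ^ (-γ) * K + 1,
    mul_pos (mul_pos hC₀pos (Real.exp_pos _)) hVolpos, by linarith, fun v => ?_⟩
  set t : ℝ := ‖v‖ with hts
  clear_value t
  have ht : 0 ≤ t := by rw [hts]; exact norm_nonneg v
  have h1t : (0 : ℝ) < 1 + t := by linarith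
  have hg := cfb_g_integrable hd hγl hγu v
  have hgnn : ∀ vs : Rd d, 0 ≤ ‖v - vs‖ ^ γ * Maxw d vs :=
    fun vs => mul_nonneg (Real.rpow_nonneg (norm_nonneg _) _) (cfb_maxw_pos d vs).le
  have hrppos : (0 : ℝ) ≤ (1 + t) ^ γ := Real.rpow_nonneg h1t.le _
  constructor
  · -- lower bound
    have hae : ∀ᵐ vs : Rd d, vs ≠ v := by
      have h : {a : Rd d | ¬a ≠ v} = {v} := by ext a; simp
      rw [ae_iff, h]
      exact measure_singleton v
    have hmono : ∫ _vs in Metric.ball (0 : Rd d) 1, (1 + t) ^ γ * (C₀ * Real.exp (-2⁻¹))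
        ≤ ∫ vs in Metric.ball (0 : Rd d) 1, ‖v - vs‖ ^ γ * Maxw d vs := by
      apply setIntegral_mono_ae_restrict
        (integrableOn_const measure_ball_lt_top.ne) hg.integrableOn
      rw [Filter.EventuallyLE, ae_restrict_iff' measurableSet_ball]
      filter_upwards [hae] with vs hvs hmem
      have hne : v - vs ≠ 0 := sub_ne_zero.2 (Ne.symm hvs)
      have hnp : 0 < ‖v - vs‖ := norm_pos_iff.2 hne
      rw [mem_ball_zero_iff] at hmem
      have hle : ‖v - vs‖ ≤ 1 + t := by
        calc ‖v - vs‖ ≤ ‖v‖ + ‖vs‖ := norm_sub_le _ _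
          _ ≤ 1 + t := by rw [← hts]; linarith
      have h2 : (1 + t) ^ γ ≤ ‖v - vs‖ ^ γ :=
        Real.rpow_le_rpow_of_nonpos hnp hle hγu.le
      have h3 : C₀ * Real.exp (-2⁻¹) ≤ Maxw d vs := by
        unfold Maxw
        rw [← hC₀]
        apply mul_le_mul_of_nonneg_left _ hC₀pos.le
        apply Real.exp_le_exp.2
        nlinarith [norm_nonneg vs]
      exact mul_le_mul h2 h3 (by positivity) (Real.rpow_nonneg hnp.le _)
    have hfull : ∫ vs in Metric.ball (0 : Rd d) 1, ‖v - vs‖ ^ γ * Maxw d vs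
        ≤ collFreq d γ v := by
      unfold collFreq
      exact setIntegral_le_integral hg (Filter.Eventually.of_forall hgnn)
    calc C₀ * Real.exp (-2⁻¹) * Vol * (1 + t) ^ γ
        = ∫ _vs in Metric.ball (0 : Rd d) 1, (1 + t) ^ γ * (C₀ * Real.exp (-2⁻¹)) := by
          rw [setIntegral_const, smul_eq_mul, measureReal_def, ← hVol]; ring
      _ ≤ _ := hmono.trans hfull
  · -- upper bound
    set R : ℝ := (1 + t) / 2 with hRdef
    clear_value R
    have hR0 : 0 < R := by rw [hRdef]; linarith
    obtain ⟨hJint, hJbd⟩ := cfb_J_bound hd hγl hγu v hR0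
    set E : ℝ := Real.exp (-(max ((t - 1) / 2) 0) ^ 2 / 2) with hE
    clear_value E
    have hEpos : 0 < E := by rw [hE]; exact Real.exp_pos _
    have hsplit : collFreq d γ v =
        (∫ vs in Metric.ball v R, ‖v - vs‖ ^ γ * Maxw d vs) +
          ∫ vs in (Metric.ball v R)ᶜ, ‖v - vs‖ ^ γ * Maxw d vs := by
      unfold collFreq
      exact (integral_add_compl measurableSet_ball hg).symm
    have hnear : (∫ vs in Metric.ball v R, ‖v - vs‖ ^ γ * Maxw d vs)
        ≤ (I₁ + R ^ d * Vol) * (C₀ * E) := by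
      calc (∫ vs in Metric.ball v R, ‖v - vs‖ ^ γ * Maxw d vs)
          ≤ ∫ vs in Metric.ball v R, ‖v - vs‖ ^ γ * (C₀ * E) := by
            apply setIntegral_mono_on hg.integrableOn (hJint.mul_const _) measurableSet_ball
            intro vs hvs
            have hvnorm : ‖v - vs‖ < R := by
              have h5 := Metric.mem_ball.1 hvs
              rw [dist_eq_norm] at h5
              rwa [norm_sub_rev]
            have hmx : max ((t - 1) / 2) 0 ≤ ‖vs‖ := by
              apply max_le _ (norm_nonneg _)
              have h4 : ‖v‖ - ‖vs‖ ≤ ‖v - vs‖ := norm_sub_norm_le v vs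
              rw [← hts] at h4
              have h6 : (t - 1) / 2 = t - R := by rw [hRdef]; ring
              rw [h6]
              linarith
            have hMle : Maxw d vs ≤ C₀ * E := by
              unfold Maxw
              rw [← hC₀, hE]
              apply mul_le_mul_of_nonneg_left _ hC₀pos.le
              apply Real.exp_le_exp.2
              have h6 : (max ((t - 1) / 2) 0) ^ 2 ≤ ‖vs‖ ^ 2 :=
                pow_le_pow_left₀ (le_max_right _ _) hmx 2
              linarith
            exact mul_le_mul_of_nonneg_left hMle (Real.rpow_nonneg (norm_nonneg _) _)
        _ = (∫ vs in Metric.ball v R, ‖v - vs‖ ^ γ) * (C₀ * E) := integral_mul_const _ _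
        _ ≤ (I₁ + R ^ d * Vol) * (C₀ * E) := by
            apply mul_le_mul_of_nonneg_right _ (by positivity)
            rw [hI₁, hVol]
            exact hJbd
    have hfar : (∫ vs in (Metric.ball v R)ᶜ, ‖v - vs‖ ^ γ * Maxw d vs) ≤ R ^ γ * K := by
      calc (∫ vs in (Metric.ball v R)ᶜ, ‖v - vs‖ ^ γ * Maxw d vs)
          ≤ ∫ vs in (Metric.ball v R)ᶜ, R ^ γ * Maxw d vs := by
            apply setIntegral_mono_on hg.integrableOn
              (((cfb_maxw_integrable d).const_mul _).integrableOn) measurableSet_ball.compl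
            intro vs hvs
            have h1 : R ≤ ‖v - vs‖ := by
              rw [Set.mem_compl_iff, Metric.mem_ball, not_lt, dist_eq_norm] at hvs
              calc R ≤ ‖vs - v‖ := hvs
                _ = ‖v - vs‖ := norm_sub_rev _ _
            exact mul_le_mul_of_nonneg_right
              (Real.rpow_le_rpow_of_nonpos hR0 h1 hγu.le) (cfb_maxw_pos d vs).le
        _ = R ^ γ * ∫ vs in (Metric.ball v R)ᶜ, Maxw d vs := integral_const_mul _ _
        _ ≤ R ^ γ * K := by
            apply mul_le_mul_of_nonneg_left _ (Real.rpow_nonneg hR0.le _)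
            rw [hK]
            exact setIntegral_le_integral (cfb_maxw_integrable d)
              (Filter.Eventually.of_forall fun vs => (cfb_maxw_pos d vs).le)
    have hRγ : R ^ γ = (1 + t) ^ γ * (2 : ℝ) ^ (-γ) := by
      rw [hRdef, Real.div_rpow h1t.le (by norm_num : (0 : ℝ) ≤ 2),
        Real.rpow_neg (by norm_num : (0 : ℝ) ≤ 2), div_eq_mul_inv]
    have hnear2 : (I₁ + R ^ d * Vol) * (C₀ * E) ≤ C₀ * (I₁ + Vol) * A₀ * (1 + t) ^ γ := by
      have hone : (1 : ℝ) ≤ (1 + t) ^ d := by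
        calc (1 : ℝ) = 1 ^ d := (one_pow d).symm
          _ ≤ (1 + t) ^ d := pow_le_pow_left₀ zero_le_one (by linarith) d
      have hpow : R ^ d ≤ (1 + t) ^ d := pow_le_pow_left₀ hR0.le (by rw [hRdef]; linarith) d
      have hstep1 : I₁ + R ^ d * Vol ≤ (I₁ + Vol) * (1 + t) ^ d := by
        nlinarith [hI₁nn, hVolpos.le, hpow, hone]
      have hstep2 : E * (1 + t) ^ d ≤ A₀ * (1 + t) ^ γ := by
        have e1 : ((1 + t) : ℝ) ^ (d : ℕ) = (1 + t) ^ ((d : ℝ) - γ) * (1 + t) ^ γ := by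
          rw [← Real.rpow_natCast (1 + t) d, ← Real.rpow_add h1t]
          norm_num
        have e2 : (1 + t) ^ ((d : ℝ) - γ) ≤ (1 + t) ^ (((2 * d : ℕ) : ℝ)) := by
          apply Real.rpow_le_rpow_of_exponent_le (by linarith)
          push_cast
          linarith
        calc E * (1 + t) ^ (d : ℕ) = E * ((1 + t) ^ ((d : ℝ) - γ) * (1 + t) ^ γ) := by
              rw [e1]
          _ ≤ E * ((1 + t) ^ (((2 * d : ℕ) : ℝ)) * (1 + t) ^ γ) := by
              apply mul_le_mul_of_nonneg_left _ hEpos.le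
              exact mul_le_mul_of_nonneg_right e2 hrppos
          _ = (E * (1 + t) ^ (2 * d)) * (1 + t) ^ γ := by
              rw [Real.rpow_natCast]; ring
          _ ≤ A₀ * (1 + t) ^ γ := by
              apply mul_le_mul_of_nonneg_right _ hrppos
              rw [hE, hA₀]
              exact cfb_exp_pow_bound d hd ht
      calc (I₁ + R ^ d * Vol) * (C₀ * E)
          ≤ ((I₁ + Vol) * (1 + t) ^ d) * (C₀ * E) :=
            mul_le_mul_of_nonneg_right hstep1 (by positivity)
        _ = (C₀ * (I₁ + Vol)) * (E * (1 + t) ^ d) := by ring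
        _ ≤ (C₀ * (I₁ + Vol)) * (A₀ * (1 + t) ^ γ) :=
            mul_le_mul_of_nonneg_left hstep2 (by positivity)
        _ = C₀ * (I₁ + Vol) * A₀ * (1 + t) ^ γ := by ring
    rw [hsplit]
    calc (∫ vs in Metric.ball v R, ‖v - vs‖ ^ γ * Maxw d vs) +
          ∫ vs in (Metric.ball v R)ᶜ, ‖v - vs‖ ^ γ * Maxw d vs
        ≤ C₀ * (I₁ + Vol) * A₀ * (1 + t) ^ γ + R ^ γ * K :=
          add_le_add (hnear.trans hnear2) hfar
      _ = (C₀ * (I₁ + Vol) * A₀ + (2 : ℝ) ^ (-γ) * K) * (1 + t) ^ γ := by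
          rw [hRγ]; ring
      _ ≤ (C₀ * (I₁ + Vol) * A₀ + (2 : ℝ) ^ (-γ) * K + 1) * (1 + t) ^ γ := by
          apply mul_le_mul_of_nonneg_right _ hrppos
          linarith
end
end

section
/- Let α, β, C > 0 with α < 1, let u : [0,∞) → [0,∞) be absolutely continuous and let ξ : [0,∞) → [0,∞) be measurable with u'(t) ≤ −C (1+t)^{-α} u(t)^{1+β} + ξ(t) for almost every t ≥ 0. Suppose C_ξ := sup_{t ≥ 0} (1+t)^{(β+1-α)/β} ξ(t) < ∞. Then for all t ≥ 0: u(t) ≤ max( 1, u(0), ((1-α+β C_ξ)/(β C))^{1/β} ) · (1+t)^{-(1-α)/β}. -/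
open MeasureTheory Real
open scoped ENNReal RealInnerProductSpace

noncomputable section

set_option maxHeartbeats 1000000 in
/-- algebraic decay for solutions of a differential inequality. -/
theorem differential_inequality_decay (α β C : ℝ)
    (hα0 : 0 < α) (hα1 : α < 1) (hβ : 0 < β) (hC : 0 < C)
    (u u' ξ : ℝ → ℝ)
    (hunn : ∀ t : ℝ, 0 ≤ t → 0 ≤ u t) (hξnn : ∀ t : ℝ, 0 ≤ t → 0 ≤ ξ t)
    (hξm : Measurable ξ)
    (hu'int : ∀ t : ℝ, 0 ≤ t → IntegrableOn u' (Set.Icc 0 t))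
    (huAC : ∀ t : ℝ, 0 ≤ t → u t = u 0 + ∫ s in (0 : ℝ)..t, u' s)
    (hode : ∀ᵐ t : ℝ, 0 ≤ t → u' t ≤ -C * (1 + t) ^ (-α) * u t ^ (1 + β) + ξ t)
    (Cξ : ℝ) (hCξ : ∀ t : ℝ, 0 ≤ t → (1 + t) ^ ((β + 1 - α) / β) * ξ t ≤ Cξ) :
    ∀ t : ℝ, 0 ≤ t →
      u t ≤ max 1 (max (u 0) (((1 - α + β * Cξ) / (β * C)) ^ (1 / β)))
        * (1 + t) ^ (-(1 - α) / β) := by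
  have h1a : (0:ℝ) < 1 - α := by linarith
  set p : ℝ := (1 - α) / β with hp_def
  have hp : 0 < p := div_pos h1a hβ
  set K : ℝ := max 1 (max (u 0) (((1 - α + β * Cξ) / (β * C)) ^ (1 / β))) with hK_def
  have hK1 : (1:ℝ) ≤ K := le_max_left _ _
  have hK0 : (0:ℝ) < K := lt_of_lt_of_le one_pos hK1
  have hKu0 : u 0 ≤ K := le_trans (le_max_left _ _) (le_max_right _ _)
  have hCxi0 : 0 ≤ Cξ := le_trans (hξnn 0 le_rfl) (by simpa using hCξ 0 le_rfl)
  have hpβ : p * β = 1 - α := div_mul_cancel₀ _ hβ.ne'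
  -- key algebraic inequality
  have hA : 0 < (1 - α + β * Cξ) / (β * C) := by
    apply div_pos (by nlinarith) (mul_pos hβ hC)
  have hKA : ((1 - α + β * Cξ) / (β * C)) ^ (1 / β) ≤ K :=
    le_trans (le_max_right _ _) (le_max_right _ _)
  have h1 : (1 - α + β * Cξ) / (β * C) ≤ K ^ β := by
    have h := Real.rpow_le_rpow (Real.rpow_nonneg hA.le _) hKA hβ.le
    rwa [← Real.rpow_mul hA.le, one_div_mul_cancel hβ.ne', Real.rpow_one] at h
  have hKβ0 : 0 < K ^ β := Real.rpow_pos_of_pos hK0 β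
  have hkey : K * p + Cξ ≤ C * K ^ (1 + β) := by
    have h1' : 1 - α + β * Cξ ≤ K ^ β * (β * C) := (div_le_iff₀ (mul_pos hβ hC)).mp h1
    have h3 : K * (1 - α + β * Cξ) ≤ K * (K ^ β * (β * C)) :=
      mul_le_mul_of_nonneg_left h1' hK0.le
    have h4 : K * (1 - α) + β * Cξ ≤ K * (K ^ β * (β * C)) := by
      nlinarith [h3, mul_nonneg (mul_nonneg (sub_nonneg.mpr hK1) hβ.le) hCxi0]
    have e : K ^ (1 + β) = K * K ^ β := by
      rw [Real.rpow_add hK0, Real.rpow_one]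
    rw [e, ← mul_le_mul_iff_of_pos_right hβ]
    have hKpβ : K * (p * β) = K * (1 - α) := by rw [hpβ]
    nlinarith [h4, hKpβ]
  -- barrier function and its derivative
  set φ : ℝ → ℝ := fun t => K * (1 + t) ^ (-p) with hφ_def
  set φd : ℝ → ℝ := fun t => K * (-p * (1 + t) ^ (-p - 1)) with hφd_def
  have hφderiv : ∀ t : ℝ, 0 ≤ t → HasDerivAt φ (φd t) t := by
    intro t ht
    have hs : (0:ℝ) < 1 + t := by linarith
    have hd1 : HasDerivAt (fun s : ℝ => 1 + s) 1 t := by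
      simpa using (hasDerivAt_id t).const_add (1:ℝ)
    have hd2 : HasDerivAt (fun s : ℝ => (1 + s) ^ (-p))
        ((-p * (1 + t) ^ (-p - 1)) * 1) t :=
      (Real.hasDerivAt_rpow_const (Or.inl hs.ne')).comp t hd1
    simpa [hφd_def, hφ_def] using hd2.const_mul K
  -- φ is a supersolution
  have hsuper : ∀ t : ℝ, 0 ≤ t →
      -C * (1 + t) ^ (-α) * (φ t) ^ (1 + β) + ξ t ≤ φd t := by
    intro t ht
    have hs : (0:ℝ) < 1 + t := by linarith
    have hr1 : 0 < (1 + t) ^ (-p) := Real.rpow_pos_of_pos hs _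
    have hrneg : 0 < (1 + t) ^ (-p - 1) := Real.rpow_pos_of_pos hs _
    have e1 : (φ t) ^ (1 + β) = K ^ (1 + β) * (1 + t) ^ (-p * (1 + β)) := by
      simp only [hφ_def]
      rw [Real.mul_rpow hK0.le hr1.le, ← Real.rpow_mul hs.le]
    have e2 : (1 + t) ^ (-α) * (1 + t) ^ (-p * (1 + β)) = (1 + t) ^ (-p - 1) := by
      rw [← Real.rpow_add hs]
      congr 1
      linear_combination -hpβ
    have e3 : ξ t ≤ Cξ * (1 + t) ^ (-p - 1) := by
      have hexp : (β + 1 - α) / β = p + 1 := by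
        rw [hp_def]; field_simp; ring
      have h := hCξ t ht
      rw [hexp] at h
      have hpow : 0 < (1 + t) ^ (p + 1) := Real.rpow_pos_of_pos hs _
      rw [show (-p - 1 : ℝ) = -(p + 1) by ring, Real.rpow_neg hs.le,
        ← div_eq_mul_inv, le_div_iff₀ hpow, mul_comm]
      exact h
    have estep : -C * (1 + t) ^ (-α) * (φ t) ^ (1 + β)
        = -(C * K ^ (1 + β)) * (1 + t) ^ (-p - 1) := by
      rw [e1, show -C * (1 + t) ^ (-α) * (K ^ (1 + β) * (1 + t) ^ (-p * (1 + β)))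
        = -(C * K ^ (1 + β)) * ((1 + t) ^ (-α) * (1 + t) ^ (-p * (1 + β))) by ring, e2]
    rw [estep]
    have hφdt : φd t = -(K * p) * (1 + t) ^ (-p - 1) := by
      simp only [hφd_def]; ring
    rw [hφdt]
    have hmul : (-(C * K ^ (1 + β)) + Cξ) * (1 + t) ^ (-p - 1)
        ≤ -(K * p) * (1 + t) ^ (-p - 1) := by
      apply mul_le_mul_of_nonneg_right _ hrneg.le
      linarith
    nlinarith [hmul, e3]
  -- main comparison argument
  intro t₁ ht₁
  have hgoal_eq : -(1 - α) / β = -p := by rw [hp_def]; ring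
  rw [hgoal_eq]
  show u t₁ ≤ φ t₁
  by_contra hcon
  push_neg at hcon
  -- continuity of u and φ on [0, t₁]
  have hu'I : IntegrableOn u' (Set.Icc 0 t₁) := hu'int t₁ ht₁
  have huIcc : Set.uIcc (0:ℝ) t₁ = Set.Icc 0 t₁ := Set.uIcc_of_le ht₁
  have hucont : ContinuousOn u (Set.Icc 0 t₁) := by
    have h1 : ContinuousOn (fun t => u 0 + ∫ s in (0:ℝ)..t, u' s) (Set.Icc 0 t₁) := by
      apply continuousOn_const.add
      have := intervalIntegral.continuousOn_primitive_interval (μ := volume)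
        (a := (0:ℝ)) (b := t₁) (f := u') (by rwa [huIcc])
      rwa [huIcc] at this
    exact h1.congr fun t ht => huAC t ht.1
  have hφcont : ContinuousOn φ (Set.Icc 0 t₁) := by
    apply continuousOn_const.mul
    apply ContinuousOn.rpow_const (continuousOn_const.add continuousOn_id)
    intro t ht
    exact Or.inl (by intro h; have h' : (1:ℝ) + t = 0 := h; linarith [ht.1])
  have hφdcont : ContinuousOn φd (Set.Icc 0 t₁) := by
    apply continuousOn_const.mul
    apply continuousOn_const.mul
    apply ContinuousOn.rpow_const (continuousOn_const.add continuousOn_id)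
    intro t ht
    exact Or.inl (by intro h; have h' : (1:ℝ) + t = 0 := h; linarith [ht.1])
  -- the set where u ≤ φ
  set S : Set ℝ := Set.Icc 0 t₁ ∩ (fun t => u t - φ t) ⁻¹' Set.Iic 0 with hS_def
  have hS_closed : IsClosed S :=
    (hucont.sub hφcont).preimage_isClosed_of_isClosed isClosed_Icc isClosed_Iic
  have h0S : (0:ℝ) ∈ S := by
    refine ⟨⟨le_rfl, ht₁⟩, ?_⟩
    simp only [Set.mem_preimage, Set.mem_Iic, hφ_def]
    have : (1:ℝ) + 0 = 1 := by ring
    rw [this, Real.one_rpow]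
    linarith
  have hS_bdd : BddAbove S := (bddAbove_Icc).mono Set.inter_subset_left
  set T := sSup S with hT_def
  have hT_mem : T ∈ S := hS_closed.csSup_mem ⟨0, h0S⟩ hS_bdd
  obtain ⟨⟨hT0, hTt₁⟩, hTφ'⟩ := hT_mem
  have hTφ : u T - φ T ≤ 0 := hTφ'
  have hgt : ∀ t, T < t → t ≤ t₁ → φ t < u t := by
    intro t h1 h2
    by_contra h
    push_neg at h
    have hmem : t ∈ S := ⟨⟨le_trans hT0 h1.le, h2⟩, by
      simp only [Set.mem_preimage, Set.mem_Iic]; linarith⟩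
    exact absurd (le_csSup hS_bdd hmem) (not_le.mpr h1)
  -- integrability
  have hu'I01 : IntervalIntegrable u' volume 0 t₁ := by
    apply MeasureTheory.IntegrableOn.intervalIntegrable
    rwa [huIcc]
  have hu'I0T : IntervalIntegrable u' volume 0 T := by
    apply MeasureTheory.IntegrableOn.intervalIntegrable
    rw [Set.uIcc_of_le hT0]
    exact hu'I.mono_set (Set.Icc_subset_Icc le_rfl hTt₁)
  have hu'ITt : IntervalIntegrable u' volume T t₁ := by
    apply MeasureTheory.IntegrableOn.intervalIntegrable
    rw [Set.uIcc_of_le hTt₁]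
    exact hu'I.mono_set (Set.Icc_subset_Icc hT0 le_rfl)
  have hφdITt : IntervalIntegrable φd volume T t₁ := by
    apply ContinuousOn.intervalIntegrable
    apply hφdcont.mono
    rw [Set.uIcc_of_le hTt₁]
    exact Set.Icc_subset_Icc hT0 le_rfl
  -- fundamental theorem of calculus pieces
  have hint_u : ∫ s in T..t₁, u' s = u t₁ - u T := by
    rw [← intervalIntegral.integral_interval_sub_left hu'I01 hu'I0T]
    have e1 := huAC t₁ ht₁
    have e2 := huAC T hT0
    linarith
  have hint_φ : ∫ s in T..t₁, φd s = φ t₁ - φ T := by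
    apply intervalIntegral.integral_eq_sub_of_hasDerivAt
    · intro t ht
      rw [Set.uIcc_of_le hTt₁] at ht
      exact hφderiv t (le_trans hT0 ht.1)
    · exact hφdITt
  -- almost-everywhere comparison of derivatives on [T, t₁]
  have hae_le : u' ≤ᵐ[volume.restrict (Set.Icc T t₁)] φd := by
    have hae1 : ∀ᵐ t ∂(volume.restrict (Set.Icc T t₁)), t ∈ Set.Icc T t₁ :=
      ae_restrict_mem measurableSet_Icc
    have hae2 := ae_restrict_of_ae (μ := volume) (s := Set.Icc T t₁) hode
    have hne : ∀ᵐ t : ℝ, t ≠ T := by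
      refine ae_iff.mpr ?_
      simp [measure_singleton]
    have hae3 := ae_restrict_of_ae (μ := volume) (s := Set.Icc T t₁) hne
    filter_upwards [hae1, hae2, hae3] with t htmem hodet htne
    have hTlt : T < t := lt_of_le_of_ne htmem.1 (Ne.symm htne)
    have ht0 : 0 ≤ t := le_trans hT0 htmem.1
    have hugt := hgt t hTlt htmem.2
    have hs : (0:ℝ) < 1 + t := by linarith
    have hφpos : 0 ≤ φ t := by
      simp only [hφ_def]
      positivity
    have hrpow : (φ t) ^ (1 + β) ≤ (u t) ^ (1 + β) :=
      Real.rpow_le_rpow hφpos hugt.le (by linarith)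
    have hnn : 0 < (1 + t) ^ (-α) := Real.rpow_pos_of_pos hs _
    have hmul : -C * (1 + t) ^ (-α) * (u t) ^ (1 + β)
        ≤ -C * (1 + t) ^ (-α) * (φ t) ^ (1 + β) := by
      nlinarith [mul_le_mul_of_nonneg_left hrpow (le_of_lt (mul_pos hC hnn))]
    calc u' t ≤ -C * (1 + t) ^ (-α) * (u t) ^ (1 + β) + ξ t := hodet ht0
      _ ≤ -C * (1 + t) ^ (-α) * (φ t) ^ (1 + β) + ξ t := by linarith
      _ ≤ φd t := hsuper t ht0
  have hmono : ∫ s in T..t₁, u' s ≤ ∫ s in T..t₁, φd s :=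
    intervalIntegral.integral_mono_ae_restrict hTt₁ hu'ITt hφdITt hae_le
  rw [hint_u, hint_φ] at hmono
  linarith
end
end

section
/- Fix an integer d ≥ 2, γ ∈ (-d, 0] and β ≤ 0. There exists a constant C > 0, depending only on d, γ and β, such that for all v, w ∈ ℝ^d with v ≠ w: |v-w|^β ∫_{(v-w)^⊥} exp(-|V_⊥ + z|²/2) (|z|² + |v-w|²)^{(γ-d+2)/2} dz ≥ C exp(-(|v|² + |w|²)). -/
open MeasureTheory Real
open scoped ENNReal RealInnerProductSpace

noncomputable section

set_option maxHeartbeats 1000000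

lemma rpow_le_exp_aux' {a : ℝ} (ha : 0 ≤ a) {x : ℝ} (hx : 0 < x) :
    x ^ a ≤ Real.exp (a * Real.log a - a) * Real.exp x := by
  rw [Real.rpow_def_of_pos hx, ← Real.exp_add]
  apply Real.exp_le_exp.mpr
  rcases eq_or_lt_of_le ha with h | h
  · simp [← h]; linarith
  · have h1 : Real.log (x / a) ≤ x / a - 1 := Real.log_le_sub_one_of_pos (by positivity)
    rw [Real.log_div hx.ne' h.ne'] at h1
    have h2 : a * (Real.log x - Real.log a) ≤ a * (x / a - 1) :=
      mul_le_mul_of_nonneg_left h1 ha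
    have h3 : a * (x / a - 1) = x - a := by field_simp
    nlinarith

lemma poly_le_exp' {a c : ℝ} (ha : 0 ≤ a) (hc : 0 < c) :
    ∃ C : ℝ, 0 < C ∧ ∀ x : ℝ, 0 < x → x ^ a ≤ C * Real.exp (c * x) := by
  refine ⟨Real.exp (a * Real.log a - a) * (c ^ a)⁻¹, by positivity, fun x hx => ?_⟩
  have h1 : (c * x) ^ a ≤ Real.exp (a * Real.log a - a) * Real.exp (c * x) :=
    rpow_le_exp_aux' ha (by positivity)
  rw [Real.mul_rpow hc.le hx.le] at h1
  have hca : (0:ℝ) < c ^ a := Real.rpow_pos_of_pos hc a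
  calc x ^ a = (c ^ a)⁻¹ * (c ^ a * x ^ a) := by field_simp
    _ ≤ (c ^ a)⁻¹ * (Real.exp (a * Real.log a - a) * Real.exp (c * x)) := by
        apply mul_le_mul_of_nonneg_left h1 (by positivity)
    _ = Real.exp (a * Real.log a - a) * (c ^ a)⁻¹ * Real.exp (c * x) := by ring

lemma neg_rpow_ge' {a c : ℝ} (ha : 0 ≤ a) (hc : 0 < c) :
    ∃ C : ℝ, 0 < C ∧ ∀ x : ℝ, 0 < x → C * Real.exp (-(c * x)) ≤ x ^ (-a) := by
  obtain ⟨C, hC, h⟩ := poly_le_exp' ha hc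
  refine ⟨C⁻¹, by positivity, fun x hx => ?_⟩
  rw [Real.rpow_neg hx.le, Real.exp_neg]
  have hxa : (0:ℝ) < x ^ a := Real.rpow_pos_of_pos hx a
  calc C⁻¹ * (Real.exp (c * x))⁻¹ = (C * Real.exp (c * x))⁻¹ := by rw [mul_inv]
    _ ≤ (x ^ a)⁻¹ := by
        apply inv_anti₀ hxa (h x hx)

lemma scalar_bound' (d : ℕ) (hd : 2 ≤ d) (γ β : ℝ) (hγu : γ ≤ 0) (hβ : β ≤ 0) :
    ∃ C : ℝ, 0 < C ∧ ∀ s : ℝ, 0 < s →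
      C * Real.exp (-s) ≤
        (2 * s) ^ (β / 2) * ((1 + 2 * s) ^ ((γ - d + 2) / 2) *
          (Real.exp (-(s / 2)) * Real.exp (-1))) := by
  have ha1 : (0:ℝ) ≤ -(β / 2) := by linarith
  have ha2 : (0:ℝ) ≤ -((γ - d + 2) / 2) := by
    have : (2:ℝ) ≤ d := by exact_mod_cast hd
    linarith
  obtain ⟨C₁, hC₁, h₁⟩ := neg_rpow_ge' ha1 (show (0:ℝ) < 1/8 by norm_num)
  obtain ⟨C₂, hC₂, h₂⟩ := neg_rpow_ge' ha2 (show (0:ℝ) < 1/8 by norm_num)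
  refine ⟨C₁ * C₂ * Real.exp (-1) * Real.exp (-(1/8 : ℝ)), by positivity, fun s hs => ?_⟩
  have hb1 : C₁ * Real.exp (-(1/8 * (2*s))) ≤ (2*s) ^ (β/2) := by
    have := h₁ (2*s) (by linarith)
    rwa [show -(-(β/2)) = β/2 by ring] at this
  have hb2 : C₂ * Real.exp (-(1/8 * (1 + 2*s))) ≤ (1 + 2*s) ^ ((γ - d + 2)/2) := by
    have := h₂ (1 + 2*s) (by linarith)
    rwa [show -(-((γ - d + 2)/2)) = (γ - d + 2)/2 by ring] at this
  have hp1 : (0:ℝ) < (2*s) ^ (β/2) := Real.rpow_pos_of_pos (by linarith) _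
  have key : (C₁ * Real.exp (-(1/8 * (2*s)))) * ((C₂ * Real.exp (-(1/8 * (1 + 2*s)))) *
      (Real.exp (-(s/2)) * Real.exp (-1))) ≤
      (2*s) ^ (β/2) * ((1 + 2*s) ^ ((γ - d + 2)/2) * (Real.exp (-(s/2)) * Real.exp (-1))) := by
    apply mul_le_mul hb1 (mul_le_mul_of_nonneg_right hb2 (by positivity)) (by positivity)
      hp1.le
  refine le_trans (le_of_eq ?_) key
  have em : rexp (-(s/4)) * rexp (-(s/4)) * rexp (-(s/2)) = rexp (-s) := by
    rw [← Real.exp_add, ← Real.exp_add]; ring_nf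
  rw [show (-(1/8 * (2*s)) : ℝ) = -(s/4) by ring,
     show (-(1/8 * (1+2*s)) : ℝ) = -(1/8) + -(s/4) by ring,
     Real.exp_add, ← em]
  ring

/-- lower bound for the hyperplane integral `I(v,w)` when `b = 1`. -/
theorem hyperplane_integral_lower_bound (d : ℕ) (hd : 2 ≤ d) (γ β : ℝ)
    (hγl : -(d : ℝ) < γ) (hγu : γ ≤ 0) (hβ : β ≤ 0) :
    ∃ C : ℝ, 0 < C ∧ ∀ v w : Rd d, v ≠ w →
      C * Real.exp (-(‖v‖ ^ 2 + ‖w‖ ^ 2)) ≤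
        ‖v - w‖ ^ β *
          ∫ z : (ℝ ∙ (v - w))ᗮ,
            Real.exp (-‖(Submodule.orthogonalProjectionOnto (ℝ ∙ (v - w))ᗮ ((2 : ℝ)⁻¹ • (v + w))
                  : (ℝ ∙ (v - w))ᗮ) + z‖ ^ 2 / 2)
              * (‖z‖ ^ 2 + ‖v - w‖ ^ 2) ^ ((γ - d + 2) / 2) := by
  obtain ⟨C₀, hC₀, hsc⟩ := scalar_bound' d hd γ β hγu hβ
  set Vol : ℝ := Real.sqrt π ^ (d - 1) / Real.Gamma (((d - 1 : ℕ) : ℝ) / 2 + 1) with hVoldef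
  have hVolpos : 0 < Vol := by
    apply div_pos (pow_pos (Real.sqrt_pos.mpr Real.pi_pos) _)
    apply Real.Gamma_pos_of_pos; positivity
  refine ⟨C₀ * Vol, by positivity, fun v w hvw => ?_⟩
  have hu : v - w ≠ 0 := sub_ne_zero.mpr hvw
  have hr : (0:ℝ) < ‖v - w‖ := norm_pos_iff.mpr hu
  set H := (ℝ ∙ (v - w))ᗮ with hH
  have hrank : Module.finrank ℝ H = d - 1 := by
    rw [hH]
    have h1 : Module.finrank ℝ (ℝ ∙ (v - w)) = 1 := finrank_span_singleton hu
    have h2 := Submodule.finrank_add_finrank_orthogonal (K := (ℝ ∙ (v - w)))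
    rw [h1, finrank_euclideanSpace_fin] at h2
    omega
  haveI : Nontrivial H := by
    have : 0 < Module.finrank ℝ H := by omega
    exact Module.nontrivial_of_finrank_pos this
  have hball : volume (Metric.ball (0 : H) 1) = ENNReal.ofReal Vol := by
    rw [InnerProductSpace.volume_ball, hrank, hVoldef]
    simp
  have hgauss : Integrable (fun z : H => Real.exp (-(2⁻¹:ℝ) * ‖z‖^2)) := by
    have hi := (GaussianFourier.integrable_cexp_neg_mul_sq_norm_add
      (V := H) (b := (1/2:ℂ)) (by norm_num) 0 0).norm
    simpa [Complex.norm_exp, ← Complex.ofReal_pow] using hi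
  -- abbreviations
  set c : H := Submodule.orthogonalProjectionOnto H ((2:ℝ)⁻¹ • (v + w)) with hc
  have hr2s : ‖v - w‖^2 ≤ 2*(‖v‖^2+‖w‖^2) := by
    have h0 := mul_self_le_mul_self (norm_nonneg (v-w)) (norm_sub_le v w)
    nlinarith [sq_nonneg (‖v‖ - ‖w‖)]
  have hs : (0:ℝ) < ‖v‖^2 + ‖w‖^2 := by nlinarith
  have hc2 : ‖c‖^2 ≤ (‖v‖^2+‖w‖^2)/2 := by
    have h1 : ‖c‖ ≤ ‖(2:ℝ)⁻¹ • (v+w)‖ := by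
      calc ‖c‖ ≤ ‖Submodule.orthogonalProjectionOnto H‖ * ‖(2:ℝ)⁻¹ • (v+w)‖ :=
            (Submodule.orthogonalProjectionOnto H).le_opNorm _
        _ ≤ 1 * ‖(2:ℝ)⁻¹ • (v+w)‖ :=
            mul_le_mul_of_nonneg_right (Submodule.orthogonalProjectionOnto_norm_le H) (norm_nonneg _)
        _ = ‖(2:ℝ)⁻¹ • (v+w)‖ := one_mul _
    have h2 : ‖(2:ℝ)⁻¹ • (v+w)‖ = 2⁻¹ * ‖v+w‖ := by
      rw [norm_smul]; simp
    rw [h2] at h1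
    have h1sq : ‖c‖^2 ≤ (2⁻¹ * ‖v+w‖)^2 := pow_le_pow_left₀ (norm_nonneg c) h1 2
    have h2sq : ‖v+w‖^2 ≤ (‖v‖ + ‖w‖)^2 := pow_le_pow_left₀ (norm_nonneg _) (norm_add_le v w) 2
    nlinarith [sq_nonneg (‖v‖ - ‖w‖)]
  have hp : (γ - (d:ℝ) + 2)/2 ≤ 0 := by
    have : (2:ℝ) ≤ d := by exact_mod_cast hd
    linarith
  -- the integrand
  set g : H → ℝ := fun z => Real.exp (-‖c + z‖^2/2) * (‖z‖^2 + ‖v - w‖^2) ^ ((γ - (d:ℝ) + 2)/2)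
    with hg
  have hnonneg : ∀ z : H, 0 ≤ g z := fun z => by
    rw [hg]
    positivity
  have hcont : Continuous g := by
    rw [hg]
    apply Continuous.mul
    · apply Real.continuous_exp.comp
      fun_prop
    · apply Continuous.rpow_const
      · fun_prop
      · intro z; left; positivity
  have hint : Integrable g := by
    have htrans : Integrable (fun z : H => Real.exp (-(2⁻¹:ℝ) * ‖c + z‖^2)) := by
      have hmp := measurePreserving_add_left (volume : Measure H) c
      exact (hmp.integrable_comp hgauss.aestronglyMeasurable).mpr hgauss
    apply Integrable.mono' (htrans.const_mul ((‖v-w‖^2) ^ ((γ - (d:ℝ) + 2)/2)))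
      hcont.aestronglyMeasurable
    filter_upwards with z
    rw [Real.norm_eq_abs, abs_of_nonneg (hnonneg z), hg]
    have h1 : (‖z‖^2 + ‖v-w‖^2) ^ ((γ - (d:ℝ) + 2)/2) ≤ (‖v-w‖^2) ^ ((γ - (d:ℝ) + 2)/2) :=
      Real.rpow_le_rpow_of_nonpos (pow_pos hr 2) (by nlinarith [sq_nonneg ‖z‖]) hp
    have h2 : (-‖c+z‖^2/2 : ℝ) = -(2⁻¹:ℝ) * ‖c+z‖^2 := by ring
    simp only [h2]
    calc Real.exp (-(2⁻¹:ℝ) * ‖c+z‖^2) * (‖z‖^2 + ‖v-w‖^2) ^ ((γ - (d:ℝ) + 2)/2)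
        ≤ Real.exp (-(2⁻¹:ℝ) * ‖c+z‖^2) * (‖v-w‖^2) ^ ((γ - (d:ℝ) + 2)/2) :=
          mul_le_mul_of_nonneg_left h1 (Real.exp_nonneg _)
      _ = (‖v-w‖^2) ^ ((γ - (d:ℝ) + 2)/2) * Real.exp (-(2⁻¹:ℝ) * ‖c+z‖^2) := mul_comm _ _
  -- lower bound on the ball
  set L : ℝ := (1 + 2*(‖v‖^2+‖w‖^2)) ^ ((γ - (d:ℝ) + 2)/2) *
      (Real.exp (-((‖v‖^2+‖w‖^2)/2)) * Real.exp (-1)) with hL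
  have hlow : ∀ z ∈ Metric.ball (0:H) 1, L ≤ g z := by
    intro z hz
    have hz1 : ‖z‖ < 1 := by simpa using hz
    have hz2 : ‖z‖^2 ≤ 1 := by nlinarith [norm_nonneg z]
    have e1 : Real.exp (-((‖v‖^2+‖w‖^2)/2)) * Real.exp (-1) ≤ Real.exp (-‖c+z‖^2/2) := by
      rw [← Real.exp_add]
      apply Real.exp_le_exp.mpr
      nlinarith [pow_le_pow_left₀ (norm_nonneg (c+z)) (norm_add_le c z) 2,
        sq_nonneg (‖c‖ - ‖z‖), hz2, hc2]
    have e2 : (1 + 2*(‖v‖^2+‖w‖^2)) ^ ((γ - (d:ℝ) + 2)/2) ≤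
        (‖z‖^2 + ‖v-w‖^2) ^ ((γ - (d:ℝ) + 2)/2) := by
      apply Real.rpow_le_rpow_of_nonpos
        (add_pos_of_nonneg_of_pos (sq_nonneg _) (pow_pos hr 2)) (by linarith) hp
    rw [hL, hg]
    calc (1 + 2*(‖v‖^2+‖w‖^2)) ^ ((γ - (d:ℝ) + 2)/2) *
        (Real.exp (-((‖v‖^2+‖w‖^2)/2)) * Real.exp (-1))
        ≤ (‖z‖^2 + ‖v-w‖^2) ^ ((γ - (d:ℝ) + 2)/2) * Real.exp (-‖c+z‖^2/2) :=
          mul_le_mul e2 e1 (by positivity) (Real.rpow_nonneg (by positivity) _)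
      _ = Real.exp (-‖c+z‖^2/2) * (‖z‖^2 + ‖v-w‖^2) ^ ((γ - (d:ℝ) + 2)/2) := mul_comm _ _
  have hIB : L * (volume (Metric.ball (0:H) 1)).toReal ≤ ∫ z in Metric.ball (0:H) 1, g z :=
    setIntegral_ge_of_const_le_real measurableSet_ball measure_ball_lt_top.ne hlow
      hint.integrableOn
  have hI2 : ∫ z in Metric.ball (0:H) 1, g z ≤ ∫ z, g z :=
    setIntegral_le_integral hint (Filter.Eventually.of_forall hnonneg)
  have hvolR : (volume (Metric.ball (0:H) 1)).toReal = Vol := by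
    rw [hball, ENNReal.toReal_ofReal hVolpos.le]
  have hIge : L * Vol ≤ ∫ z, g z := by
    rw [← hvolR]; exact hIB.trans hI2
  have hLnn : 0 ≤ L := by rw [hL]; positivity
  have hrpowβ : (2*(‖v‖^2+‖w‖^2)) ^ (β/2) ≤ ‖v-w‖ ^ β := by
    have h1 : ‖v-w‖ ^ β = (‖v-w‖^2) ^ (β/2) := by
      rw [← Real.rpow_natCast ‖v-w‖ 2, ← Real.rpow_mul (norm_nonneg _)]
      congr 1
      push_cast
      ring
    rw [h1]
    exact Real.rpow_le_rpow_of_nonpos (pow_pos hr 2) hr2s (by linarith)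
  calc C₀ * Vol * Real.exp (-(‖v‖^2 + ‖w‖^2)) = Vol * (C₀ * Real.exp (-(‖v‖^2 + ‖w‖^2))) := by
        ring
    _ ≤ Vol * ((2*(‖v‖^2+‖w‖^2)) ^ (β/2) * L) := by
        apply mul_le_mul_of_nonneg_left _ hVolpos.le
        rw [hL]
        exact hsc _ hs
    _ = (2*(‖v‖^2+‖w‖^2)) ^ (β/2) * (L * Vol) := by ring
    _ ≤ ‖v-w‖ ^ β * ∫ z, g z :=
        mul_le_mul hrpowβ hIge (by positivity) (Real.rpow_nonneg (norm_nonneg _) β)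
end
end
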